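/- arXiv:2602.07285 — 2 statements merged into one kernel-verified Lean document; each statement's English description precedes it below -/
import Mathlib

section
/- For μ ∈ I_1 = (0, μ_1], the extremal boundary values satisfy p*(μ) = s_1 and q*(μ) = (π − μ s_1)/(1 − μ); moreover q*(μ) is strictly decreasing in μ on I_1, with limit π as μ → 0⁺ and value q_1 := (π − P(S=s_1)·s_1)/(1 − P(S=s_1)) < π at μ = μ_1. -/
open Finset

/-!
Single-group setting.  A finite probability space `(Ω, P)`, a binary target `Y` with
base rate `π := P(Y = 1)`, and a calibrated score `S` taking `m > 1` distinct values
`1 ≥ s_1 > ⋯ > s_m ≥ 0` (here 0-indexed: `s i` is the paper's `s_{i+1}`), each with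
positive probability `w i = P(S = s i)`, are—via calibration
`P(Y = 1 ∣ S = s i) = s i`—completely described, for the purposes of classifiers
based on `S`, by the data below.  A (possibly randomized) binary classifier `R`
based on `S` (i.e. `P(R = 1 ∣ S, Y) = P(R = 1 ∣ S)`) is in turn determined by its
selection rule `t i = P(R = 1 ∣ S = s i)`, with `P(R = 1) = ∑ i, w i * t i`,
`P(Y = 1, R = 1) = ∑ i, s i * w i * t i`, `PPV(R) = P(Y = 1 ∣ R = 1)` and
`FOR(R) = P(Y = 1 ∣ R = 0)` as given below.
-/
structure CalibScore where
  m : ℕ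
  s : ℕ → ℝ
  w : ℕ → ℝ
  one_lt_m : 1 < m
  s_nonneg : ∀ i, i < m → 0 ≤ s i
  s_le_one : ∀ i, i < m → s i ≤ 1
  s_desc : ∀ i j, i < j → j < m → s j < s i
  w_pos : ∀ i, i < m → 0 < w i
  w_sum : ∑ i ∈ Finset.range m, w i = 1

namespace CalibScore

/-- Base rate `π = P(Y = 1) = E[S]` (by calibration). -/
noncomputable def pi (D : CalibScore) : ℝ := ∑ i ∈ Finset.range D.m, D.s i * D.w i

/-- `t` is a selection rule (`t i = P(R = 1 ∣ S = s i)` for a classifier `R` based on `S`). -/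
def IsSelRule (D : CalibScore) (t : ℕ → ℝ) : Prop := ∀ i, i < D.m → 0 ≤ t i ∧ t i ≤ 1

/-- Selection rate `μ = P(R = 1)`. -/
noncomputable def selRate (D : CalibScore) (t : ℕ → ℝ) : ℝ :=
  ∑ i ∈ Finset.range D.m, D.w i * t i

/-- `P(Y = 1, R = 1) = ∑ i, s i * P(S = s i) * P(R = 1 ∣ S = s i)` (by calibration). -/
noncomputable def posSel (D : CalibScore) (t : ℕ → ℝ) : ℝ :=
  ∑ i ∈ Finset.range D.m, D.s i * D.w i * t i

/-- `PPV(R) = P(Y = 1 ∣ R = 1)`. -/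
noncomputable def ppv (D : CalibScore) (t : ℕ → ℝ) : ℝ := D.posSel t / D.selRate t

/-- `FOR(R) = P(Y = 1 ∣ R = 0)`. -/
noncomputable def forr (D : CalibScore) (t : ℕ → ℝ) : ℝ :=
  (D.pi - D.posSel t) / (1 - D.selRate t)

/-- `(p, q)` is feasible with selection rate `μ`: attained by a nonconstant
classifier based on `S` with `P(R = 1) = μ`. -/
def FeasibleWith (D : CalibScore) (μ p q : ℝ) : Prop :=
  0 < μ ∧ μ < 1 ∧ ∃ t, D.IsSelRule t ∧ D.selRate t = μ ∧ D.ppv t = p ∧ D.forr t = q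

/-- The feasible region `C`. -/
def Feasible (D : CalibScore) (p q : ℝ) : Prop := ∃ μ, D.FeasibleWith μ p q

/-- `μ_k = ∑_{i ≤ k} P(S = s_i)` (1-based `k`; `μ_0 = 0`). -/
noncomputable def muk (D : CalibScore) (k : ℕ) : ℝ := ∑ i ∈ Finset.range k, D.w i

/-- `c_k = ∑_{i < k} P(S = s_i) (s_i − s_k)` (1-based `k`). -/
noncomputable def ck (D : CalibScore) (k : ℕ) : ℝ :=
  ∑ i ∈ Finset.range (k - 1), D.w i * (D.s i - D.s (k - 1))

/-- `I_k = (μ_{k−1}, μ_k] ∩ (0, 1)` (1-based `k`). -/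
def Ik (D : CalibScore) (k : ℕ) : Set ℝ :=
  Set.Ioc (D.muk (k - 1)) (D.muk k) ∩ Set.Ioo 0 1

/-- `p*(μ)`: the supremum of `p` over pairs `(p, q)` feasible with `μ` having `q ≤ π ≤ p`. -/
noncomputable def pStar (D : CalibScore) (μ : ℝ) : ℝ :=
  sSup {p | ∃ q, D.FeasibleWith μ p q ∧ q ≤ D.pi ∧ D.pi ≤ p}

/-- `q*(μ)`: the infimum of `q` over pairs `(p, q)` feasible with `μ` having `q ≤ π ≤ p`. -/
noncomputable def qStar (D : CalibScore) (μ : ℝ) : ℝ :=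
  sInf {q | ∃ p, D.FeasibleWith μ p q ∧ q ≤ D.pi ∧ D.pi ≤ p}

/-- `p_k = s_k + c_k / μ_k` (1-based `k`), the breakpoint values of the boundary. -/
noncomputable def pkF (D : CalibScore) (k : ℕ) : ℝ := D.s (k - 1) + D.ck k / D.muk k

/-- The boundary formula `q(p) = ((π − c_k) p − s_k π) / (p − s_k − c_k)` on `J_k`
(1-based `k`). -/
noncomputable def qF (D : CalibScore) (k : ℕ) (p : ℝ) : ℝ :=
  ((D.pi - D.ck k) * p - D.s (k - 1) * D.pi) / (p - D.s (k - 1) - D.ck k)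

end CalibScore


namespace CalibScore

lemma hsle (D : CalibScore) (i : ℕ) (hi : i < D.m) : D.s i ≤ D.s 0 := by
  rcases Nat.eq_zero_or_pos i with h | h
  · subst h; exact le_rfl
  · exact (D.s_desc 0 i h hi).le

lemma w0_pos (D : CalibScore) : 0 < D.w 0 := D.w_pos 0 (by have := D.one_lt_m; omega)

lemma w0_lt_one (D : CalibScore) : D.w 0 < 1 := by
  have hm := D.one_lt_m
  have h01 : D.w 0 + D.w 1 ≤ 1 := by
    rw [← D.w_sum]
    have hsub : ({0, 1} : Finset ℕ) ⊆ Finset.range D.m := by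
      intro x hx
      simp only [Finset.mem_insert, Finset.mem_singleton] at hx
      rcases hx with h | h <;> subst h <;> simp [Finset.mem_range] <;> omega
    calc D.w 0 + D.w 1 = ∑ i ∈ ({0, 1} : Finset ℕ), D.w i := by
          rw [Finset.sum_pair (by norm_num)]
      _ ≤ ∑ i ∈ Finset.range D.m, D.w i := by
          apply Finset.sum_le_sum_of_subset_of_nonneg hsub
          intro i hi _
          exact (D.w_pos i (Finset.mem_range.mp hi)).le
  have := D.w_pos 1 hm
  linarith

lemma pi_lt_s0 (D : CalibScore) : D.pi < D.s 0 := by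
  have hm := D.one_lt_m
  have h1 : D.pi < ∑ i ∈ Finset.range D.m, D.s 0 * D.w i := by
    rw [pi]
    apply Finset.sum_lt_sum
    · intro i hi
      rw [Finset.mem_range] at hi
      exact mul_le_mul_of_nonneg_right (D.hsle i hi) (D.w_pos i hi).le
    · refine ⟨1, Finset.mem_range.mpr hm, ?_⟩
      exact mul_lt_mul_of_pos_right (D.s_desc 0 1 one_pos hm) (D.w_pos 1 hm)
  rwa [← Finset.mul_sum, D.w_sum, mul_one] at h1

lemma posSel_le (D : CalibScore) (t : ℕ → ℝ) (ht : D.IsSelRule t) :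
    D.posSel t ≤ D.s 0 * D.selRate t := by
  rw [posSel, selRate, Finset.mul_sum]
  apply Finset.sum_le_sum
  intro i hi
  rw [Finset.mem_range] at hi
  have h1 := (ht i hi).1
  have h2 := D.hsle i hi
  have h3 := (D.w_pos i hi).le
  nlinarith [mul_nonneg h3 h1]

lemma sel_t (D : CalibScore) (μ : ℝ) :
    D.selRate (fun i => if i = 0 then μ / D.w 0 else 0) = μ := by
  have hm : (0 : ℕ) < D.m := by have := D.one_lt_m; omega
  rw [selRate, Finset.sum_eq_single_of_mem 0 (Finset.mem_range.mpr hm)]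
  · have hne := D.w0_pos.ne'
    simp only [if_pos rfl, ↓reduceIte]
    field_simp
  · intro i _ hi; simp [hi]

lemma pos_t (D : CalibScore) (μ : ℝ) :
    D.posSel (fun i => if i = 0 then μ / D.w 0 else 0) = D.s 0 * μ := by
  have hm : (0 : ℕ) < D.m := by have := D.one_lt_m; omega
  rw [posSel, Finset.sum_eq_single_of_mem 0 (Finset.mem_range.mpr hm)]
  · have hne := D.w0_pos.ne'
    simp only [if_pos rfl, ↓reduceIte]
    field_simp
  · intro i _ hi; simp [hi]

lemma feas_witness (D : CalibScore) (μ : ℝ) (hμ : μ ∈ Set.Ioc 0 (D.w 0)) :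
    D.FeasibleWith μ (D.s 0) ((D.pi - μ * D.s 0) / (1 - μ)) := by
  obtain ⟨hμ0, hμw⟩ := hμ
  refine ⟨hμ0, lt_of_le_of_lt hμw D.w0_lt_one,
    fun i => if i = 0 then μ / D.w 0 else 0, ?_, D.sel_t μ, ?_, ?_⟩
  · intro i _
    by_cases h : i = 0
    · simp only [if_pos h]
      exact ⟨(div_nonneg hμ0.le D.w0_pos.le), (div_le_one D.w0_pos).mpr hμw⟩
    · simp [h]
  · rw [ppv, D.sel_t μ, D.pos_t μ, mul_div_assoc, div_self hμ0.ne', mul_one]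
  · rw [forr, D.sel_t μ, D.pos_t μ]
    ring_nf

lemma feas_bound (D : CalibScore) {μ p q : ℝ} (h : D.FeasibleWith μ p q) :
    p ≤ D.s 0 ∧ (D.pi - μ * D.s 0) / (1 - μ) ≤ q := by
  obtain ⟨hμ0, hμ1, t, ht, hsel, hppv, hforr⟩ := h
  have hps := D.posSel_le t ht
  rw [hsel] at hps
  have h1μ : (0 : ℝ) < 1 - μ := by linarith
  constructor
  · rw [← hppv, ppv, hsel, div_le_iff₀ hμ0]
    linarith
  · rw [← hforr, forr, hsel, div_le_div_iff₀ h1μ h1μ]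
    nlinarith

lemma muk_one (D : CalibScore) : D.muk 1 = D.w 0 := by
  simp [muk]

lemma main_formula (D : CalibScore) (μ : ℝ) (hμ : μ ∈ Set.Ioc (0 : ℝ) (D.muk 1)) :
    D.pStar μ = D.s 0 ∧ D.qStar μ = (D.pi - μ * D.s 0) / (1 - μ) := by
  rw [D.muk_one] at hμ
  obtain ⟨hμ0, hμw⟩ := hμ
  have h1μ : (0 : ℝ) < 1 - μ := by linarith [D.w0_lt_one]
  have hpis := D.pi_lt_s0
  have hfeas := D.feas_witness μ ⟨hμ0, hμw⟩
  have hq0 : (D.pi - μ * D.s 0) / (1 - μ) ≤ D.pi := by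
    rw [div_le_iff₀ h1μ]; nlinarith
  constructor
  · have hmem : D.s 0 ∈ {p | ∃ q, D.FeasibleWith μ p q ∧ q ≤ D.pi ∧ D.pi ≤ p} :=
      ⟨_, hfeas, hq0, hpis.le⟩
    have hub : ∀ p ∈ {p | ∃ q, D.FeasibleWith μ p q ∧ q ≤ D.pi ∧ D.pi ≤ p}, p ≤ D.s 0 := by
      rintro p ⟨q, hf, _, _⟩
      exact (D.feas_bound hf).1
    exact le_antisymm (csSup_le ⟨_, hmem⟩ hub) (le_csSup ⟨_, hub⟩ hmem)
  · have hmem : (D.pi - μ * D.s 0) / (1 - μ) ∈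
        {q | ∃ p, D.FeasibleWith μ p q ∧ q ≤ D.pi ∧ D.pi ≤ p} :=
      ⟨_, hfeas, hq0, hpis.le⟩
    have hlb : ∀ q ∈ {q | ∃ p, D.FeasibleWith μ p q ∧ q ≤ D.pi ∧ D.pi ≤ p},
        (D.pi - μ * D.s 0) / (1 - μ) ≤ q := by
      rintro q ⟨p, hf, _, _⟩
      exact (D.feas_bound hf).2
    exact le_antisymm (csInf_le ⟨_, hlb⟩ hmem) (le_csInf ⟨_, hmem⟩ hlb)

end CalibScore

/-- For `μ ∈ I_1 = (0, μ_1]`, `p*(μ) = s_1` and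
`q*(μ) = (π − μ s_1)/(1 − μ)`; moreover `q*` is strictly decreasing on `I_1`,
tends to `π` as `μ → 0⁺`, and at `μ = μ_1` equals
`q_1 = (π − P(S = s_1) s_1)/(1 − P(S = s_1)) < π`. -/
theorem stmt3 (D : CalibScore) :
    (∀ μ ∈ Set.Ioc (0 : ℝ) (D.muk 1),
      D.pStar μ = D.s 0 ∧ D.qStar μ = (D.pi - μ * D.s 0) / (1 - μ)) ∧
    StrictAntiOn D.qStar (Set.Ioc (0 : ℝ) (D.muk 1)) ∧
    Filter.Tendsto D.qStar (nhdsWithin 0 (Set.Ioi (0 : ℝ))) (nhds D.pi) ∧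
    D.qStar (D.muk 1) = (D.pi - D.w 0 * D.s 0) / (1 - D.w 0) ∧
    (D.pi - D.w 0 * D.s 0) / (1 - D.w 0) < D.pi := by
  have hpis := D.pi_lt_s0
  have hw0 := D.w0_pos
  have hw1 := D.w0_lt_one
  have hmk := D.muk_one
  refine ⟨D.main_formula, ?_, ?_, ?_, ?_⟩
  · intro a ha b hb hab
    rw [(D.main_formula a ha).2, (D.main_formula b hb).2]
    rw [hmk] at ha hb
    have h1a : (0 : ℝ) < 1 - a := by linarith [ha.2]
    have h1b : (0 : ℝ) < 1 - b := by linarith [hb.2]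
    rw [div_lt_div_iff₀ h1b h1a]
    nlinarith [mul_pos (sub_pos.mpr hab) (sub_pos.mpr hpis)]
  · have hcont : ContinuousAt (fun μ : ℝ => (D.pi - μ * D.s 0) / (1 - μ)) 0 := by
      apply ContinuousAt.div
      · fun_prop
      · fun_prop
      · norm_num
    have htend : Filter.Tendsto (fun μ : ℝ => (D.pi - μ * D.s 0) / (1 - μ))
        (nhdsWithin 0 (Set.Ioi (0 : ℝ))) (nhds D.pi) := by
      have := hcont.tendsto
      simp only [zero_mul, sub_zero] at this
      rw [div_one] at this
      exact this.mono_left nhdsWithin_le_nhds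
    apply htend.congr'
    have hio : Set.Iio (D.muk 1) ∈ nhds (0 : ℝ) := Iio_mem_nhds (by rw [hmk]; exact hw0)
    filter_upwards [self_mem_nhdsWithin, Filter.mem_inf_of_left hio] with μ h1 h2
    exact ((D.main_formula μ ⟨h1, le_of_lt h2⟩).2).symm
  · rw [(D.main_formula (D.muk 1) ⟨by rw [hmk]; exact hw0, le_refl _⟩).2, hmk]
  · rw [div_lt_iff₀ (by linarith)]
    nlinarith
end

section
/- On each interval J_k (for 1 < k < m), the boundary function q(p) = ((π − c_k)p − s_k π)/(p − s_k − c_k) is strictly increasing in p, while on J_m it is constant and equal to s_m; consequently q(p) extends continuously to p = π by setting q(π) := s_m, and is nondecreasing on [π, s_1). -/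
open Finset

namespace CalibScore

variable (D : CalibScore)

lemma muk_pos' {k : ℕ} (hk : 1 ≤ k) (hkm : k ≤ D.m) : 0 < D.muk k := by
  apply Finset.sum_pos
  · intro i hi
    exact D.w_pos i (lt_of_lt_of_le (Finset.mem_range.1 hi) hkm)
  · exact ⟨0, Finset.mem_range.2 (by omega)⟩

lemma muk_m' : D.muk D.m = 1 := D.w_sum

lemma muk_lt_one' {k : ℕ} (hk : k < D.m) : D.muk k < 1 := by
  rw [← D.muk_m']
  apply Finset.sum_lt_sum_of_subset (Finset.range_subset_range.2 hk.le)
    (i := k) (Finset.mem_range.2 hk) (by simp) (D.w_pos k hk)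
  intro j hj _
  exact (D.w_pos j (Finset.mem_range.1 hj)).le

lemma ck_pos' {k : ℕ} (h2 : 2 ≤ k) (hm : k ≤ D.m) : 0 < D.ck k := by
  apply Finset.sum_pos
  · intro i hi
    have hi' : i < k - 1 := Finset.mem_range.1 hi
    have him : i < D.m := by omega
    have : D.s (k - 1) < D.s i := D.s_desc i (k - 1) hi' (by omega)
    exact mul_pos (D.w_pos i him) (by linarith)
  · exact ⟨0, Finset.mem_range.2 (by omega)⟩

lemma ck_rec' {k : ℕ} (hk : 1 ≤ k) :
    D.ck (k + 1) = D.ck k + (D.s (k - 1) - D.s k) * D.muk k := by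
  obtain ⟨j, rfl⟩ : ∃ j, k = j + 1 := ⟨k - 1, (Nat.succ_pred_eq_of_pos hk).symm⟩
  simp only [ck, muk, Nat.add_sub_cancel]
  have h1 : ∀ i ∈ Finset.range (j + 1),
      D.w i * (D.s i - D.s (j + 1)) =
        D.w i * (D.s i - D.s j) + (D.s j - D.s (j + 1)) * D.w i := by
    intro i _; ring
  rw [Finset.sum_congr rfl h1, Finset.sum_add_distrib, Finset.sum_range_succ, ← Finset.mul_sum]
  ring

lemma pkF_alt' {k : ℕ} (h1 : 1 ≤ k) (hm : k ≤ D.m) :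
    D.pkF k = D.s k + D.ck (k + 1) / D.muk k := by
  have hμ : D.muk k ≠ 0 := (D.muk_pos' h1 hm).ne'
  rw [pkF, D.ck_rec' h1]
  field_simp
  ring

lemma pkF_succ_lt' {k : ℕ} (h1 : 1 ≤ k) (hm : k < D.m) : D.pkF (k + 1) < D.pkF k := by
  rw [D.pkF_alt' h1 hm.le, pkF]
  simp only [Nat.add_sub_cancel]
  have hc := D.ck_pos' (k := k + 1) (by omega) (by omega)
  have h0 := D.muk_pos' (k := k) h1 hm.le
  have hlt : D.muk k < D.muk (k + 1) := by
    rw [muk, muk, Finset.sum_range_succ]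
    have := D.w_pos k hm
    linarith
  have := div_lt_div_of_pos_left hc h0 hlt
  linarith

lemma pkF_lt' {j k : ℕ} (h1 : 1 ≤ j) (hjk : j < k) (hm : k ≤ D.m) :
    D.pkF k < D.pkF j := by
  induction k with
  | zero => omega
  | succ n ih =>
    rcases Nat.lt_or_ge j n with h | h
    · exact lt_trans (D.pkF_succ_lt' (by omega) (by omega)) (ih h (by omega))
    · have : j = n := by omega
      subst this
      exact D.pkF_succ_lt' h1 (by omega)

lemma ck_m' : D.ck D.m = D.pi - D.s (D.m - 1) := by
  obtain ⟨j, hj⟩ : ∃ j, D.m = j + 1 := ⟨D.m - 1, by have := D.one_lt_m; omega⟩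
  have hw := D.w_sum
  rw [hj] at hw ⊢
  simp only [ck, CalibScore.pi, hj, Nat.add_sub_cancel]
  have h1 : ∀ i ∈ Finset.range (j + 1),
      D.s i * D.w i = D.w i * (D.s i - D.s j) + D.s j * D.w i := by
    intro i _; ring
  rw [Finset.sum_congr rfl h1, Finset.sum_add_distrib, Finset.sum_range_succ, ← Finset.mul_sum, hw]
  ring

lemma pkF_m' : D.pkF D.m = D.pi := by
  rw [pkF, D.ck_m', muk_m']
  ring

lemma key_neg' {k : ℕ} (h1 : 1 ≤ k) (hm : k < D.m) :
    D.pi - D.s (k - 1) - D.ck k < 0 := by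
  have hsum : D.pi - D.s (k - 1) - D.ck k
      = ∑ i ∈ Finset.Ico (k - 1) D.m, D.w i * (D.s i - D.s (k - 1)) := by
    rw [Finset.sum_Ico_eq_sub _ (by omega : k - 1 ≤ D.m)]
    have hfull : ∑ i ∈ Finset.range D.m, D.w i * (D.s i - D.s (k - 1))
        = D.pi - D.s (k - 1) := by
      have h1' : ∀ i ∈ Finset.range D.m,
          D.w i * (D.s i - D.s (k - 1)) = D.s i * D.w i - D.s (k - 1) * D.w i := by
        intro i _; ring
      rw [Finset.sum_congr rfl h1', Finset.sum_sub_distrib, ← Finset.mul_sum, D.w_sum,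
        CalibScore.pi]
      ring
    rw [hfull, ck]
  rw [hsum]
  have hzero : (0 : ℝ) = ∑ _i ∈ Finset.Ico (k - 1) D.m, (0 : ℝ) := by simp
  rw [hzero]
  apply Finset.sum_lt_sum
  · intro i hi
    obtain ⟨hi1, hi2⟩ := Finset.mem_Ico.1 hi
    have hw := D.w_pos i hi2
    rcases Nat.eq_or_lt_of_le hi1 with h | h
    · rw [← h]; simp
    · have := D.s_desc (k - 1) i h hi2
      nlinarith
  · refine ⟨k, Finset.mem_Ico.2 ⟨by omega, hm⟩, ?_⟩
    have hw := D.w_pos k hm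
    have := D.s_desc (k - 1) k (by omega) hm
    nlinarith

lemma denom_pos' {k : ℕ} {p : ℝ} (h2 : 2 ≤ k) (hm : k < D.m) (hp : D.pkF k ≤ p) :
    0 < p - D.s (k - 1) - D.ck k := by
  have hc := D.ck_pos' h2 hm.le
  have hμ := D.muk_pos' (k := k) (by omega) hm.le
  have hμ1 := D.muk_lt_one' hm
  rw [pkF] at hp
  have h3 : D.ck k < D.ck k / D.muk k := by
    rw [lt_div_iff₀ hμ]
    nlinarith
  linarith

lemma qF_smOn' {k : ℕ} (h2 : 2 ≤ k) (hm : k < D.m) :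
    StrictMonoOn (D.qF k) (Set.Icc (D.pkF k) (D.pkF (k - 1))) := by
  intro x hx y hy hxy
  have dx := D.denom_pos' h2 hm hx.1
  have dy := D.denom_pos' h2 hm hy.1
  have hc := D.ck_pos' h2 hm.le
  have hkey := D.key_neg' (by omega) hm
  rw [qF, qF, div_lt_div_iff₀ dx dy]
  nlinarith [mul_pos (mul_pos hc (by linarith : (0:ℝ) < D.s (k - 1) + D.ck k - D.pi))
    (by linarith : (0:ℝ) < y - x)]

lemma qF_m_const' {p : ℝ} (hp : p ≠ D.pi) : D.qF D.m p = D.s (D.m - 1) := by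
  rw [qF, D.ck_m']
  have hnum : (D.pi - (D.pi - D.s (D.m - 1))) * p - D.s (D.m - 1) * D.pi
      = D.s (D.m - 1) * (p - D.pi) := by ring
  have hden : p - D.s (D.m - 1) - (D.pi - D.s (D.m - 1)) = p - D.pi := by ring
  rw [hnum, hden, mul_div_assoc, div_self (sub_ne_zero.2 hp), mul_one]

lemma match_aux {μ c s p P : ℝ} (hμ : μ ≠ 0) (hμ1 : μ ≠ 1) (hc : c ≠ 0)
    (hp : p = s + c / μ) :
    ((P - c) * p - s * P) / (p - s - c) = (P - μ * p) / (1 - μ) := by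
  have h1μ : (1 : ℝ) - μ ≠ 0 := sub_ne_zero.2 (Ne.symm hμ1)
  have hd : p - s - c = c * (1 - μ) / μ := by
    rw [hp]; field_simp; ring
  rw [div_eq_div_iff (by rw [hd]; exact div_ne_zero (mul_ne_zero hc h1μ) hμ) h1μ, hp]
  field_simp
  ring

lemma qF_match' {k : ℕ} (h2 : 2 ≤ k) (hm : k < D.m) :
    D.qF k (D.pkF k) = D.qF (k + 1) (D.pkF k) := by
  have hμ0 : D.muk k ≠ 0 := (D.muk_pos' (by omega) hm.le).ne'
  have hμ1 : D.muk k ≠ 1 := (D.muk_lt_one' hm).ne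
  have hc1 : D.ck k ≠ 0 := (D.ck_pos' h2 hm.le).ne'
  have hc2 : D.ck (k + 1) ≠ 0 := (D.ck_pos' (by omega) (by omega)).ne'
  have hp1 : D.pkF k = D.s (k - 1) + D.ck k / D.muk k := rfl
  have hp2 : D.pkF k = D.s k + D.ck (k + 1) / D.muk k := D.pkF_alt' (by omega) hm.le
  rw [qF, qF]
  simp only [Nat.add_sub_cancel]
  rw [match_aux hμ0 hμ1 hc1 hp1, match_aux hμ0 hμ1 hc2 hp2]

open Classical in
noncomputable def idxD (p : ℝ) : ℕ :=
  2 + ((Finset.Icc 2 D.m).filter (fun k => p < D.pkF k)).card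

lemma idxD_eq {k : ℕ} {p : ℝ} (h2 : 2 ≤ k) (hm : k ≤ D.m)
    (hl : D.pkF k ≤ p) (hr : p < D.pkF (k - 1)) : idxD D p = k := by
  classical
  have hfilter : (Finset.Icc 2 D.m).filter (fun j => p < D.pkF j) = Finset.Ico 2 k := by
    ext j
    simp only [Finset.mem_filter, Finset.mem_Icc, Finset.mem_Ico]
    constructor
    · rintro ⟨⟨hj2, hjm⟩, hpj⟩
      refine ⟨hj2, ?_⟩
      by_contra h
      push_neg at h
      have hle : D.pkF j ≤ D.pkF k := by
        rcases Nat.eq_or_lt_of_le h with h' | h'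
        · rw [h']
        · exact (D.pkF_lt' (by omega) h' hjm).le
      linarith
    · rintro ⟨hj2, hjk⟩
      refine ⟨⟨hj2, by omega⟩, ?_⟩
      have hle : D.pkF (k - 1) ≤ D.pkF j := by
        rcases Nat.eq_or_lt_of_le (by omega : j ≤ k - 1) with h' | h'
        · rw [h']
        · exact (D.pkF_lt' (by omega) h' (by omega)).le
      linarith
  rw [idxD, hfilter, Nat.card_Ico]
  omega

noncomputable def Qfun (p : ℝ) : ℝ :=
  if p ≤ D.pi then D.s (D.m - 1) else D.qF (idxD D p) p

lemma Qfun_eq {k : ℕ} {p : ℝ} (h2 : 2 ≤ k) (hm : k ≤ D.m)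
    (hl : D.pkF k ≤ p) (hr : p < D.pkF (k - 1)) (hπ : D.pi < p) :
    Qfun D p = D.qF k p := by
  rw [Qfun, if_neg (not_le.2 hπ), D.idxD_eq h2 hm hl hr]

lemma pi_lt_pkF' {k : ℕ} (h1 : 1 ≤ k) (hm : k < D.m) : D.pi < D.pkF k := by
  rw [← D.pkF_m']
  exact D.pkF_lt' h1 hm le_rfl

lemma Qfun_pi : Qfun D D.pi = D.s (D.m - 1) := by
  rw [Qfun, if_pos le_rfl]

lemma Qfun_const {p : ℝ} (hl : D.pi ≤ p) (hr : p < D.pkF (D.m - 1)) :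
    Qfun D p = D.s (D.m - 1) := by
  rcases eq_or_lt_of_le hl with h | h
  · rw [← h, Qfun_pi]
  · have hm := D.one_lt_m
    rw [D.Qfun_eq (k := D.m) hm (le_refl _) (by rw [D.pkF_m']; exact h.le) hr h]
    exact D.qF_m_const' h.ne'

lemma mono_glue {f : ℝ → ℝ} {a b : ℝ} {T : Set ℝ} (hab : a ≤ b) (hT : T ⊆ Set.Ici b)
    (hbT : b ∈ T) (h1 : MonotoneOn f (Set.Icc a b)) (h2 : MonotoneOn f T) :
    MonotoneOn f (Set.Icc a b ∪ T) := by
  intro x hx y hy hxy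
  rcases hx with hx | hx <;> rcases hy with hy | hy
  · exact h1 hx hy hxy
  · exact (h1 hx ⟨hab, le_refl b⟩ hx.2).trans (h2 hbT hy (hT hy))
  · have hxb : x = b := le_antisymm (hxy.trans hy.2) (hT hx)
    have hyb : y = b := le_antisymm hy.2 (hxb ▸ hxy)
    rw [hxb, hyb]
  · exact h2 hx hy hxy

end CalibScore

/-- On each interval `J_k = [p_k, p_{k−1})` (for `1 < k < m`), the
boundary function `q(p) = ((π − c_k) p − s_k π)/(p − s_k − c_k)` is strictly
increasing, while on `J_m = (π, p_{m−1})` it is constant and equal to `s_m`;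
consequently the boundary curve `q(p)` extends continuously to `p = π` by setting
`q(π) := s_m`, and is nondecreasing on `[π, s_1)`. -/
theorem stmt4 (D : CalibScore) :
    (∀ k, 1 < k → k < D.m →
      StrictMonoOn (D.qF k) (Set.Ico (D.pkF k) (D.pkF (k - 1)))) ∧
    (∀ p ∈ Set.Ioo D.pi (D.pkF (D.m - 1)), D.qF D.m p = D.s (D.m - 1)) ∧
    (∃ Q : ℝ → ℝ,
      Q D.pi = D.s (D.m - 1) ∧
      (∀ k, 1 < k → k < D.m → Set.EqOn Q (D.qF k) (Set.Ico (D.pkF k) (D.pkF (k - 1)))) ∧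
      Set.EqOn Q (D.qF D.m) (Set.Ioo D.pi (D.pkF (D.m - 1))) ∧
      ContinuousWithinAt Q (Set.Ico D.pi (D.s 0)) D.pi ∧
      MonotoneOn Q (Set.Ico D.pi (D.s 0))) := by
  have hm2 := D.one_lt_m
  have hpk1 : D.pkF 1 = D.s 0 := by
    simp [CalibScore.pkF, CalibScore.ck]
  refine ⟨?_, ?_, D.Qfun, D.Qfun_pi, ?_, ?_, ?_, ?_⟩
  · intro k h1 h2
    exact (D.qF_smOn' h1 h2).mono Set.Ico_subset_Icc_self
  · intro p hp
    exact D.qF_m_const' hp.1.ne'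
  · intro k h1 h2 p hp
    exact D.Qfun_eq h1 h2.le hp.1 hp.2
      (lt_of_lt_of_le (D.pi_lt_pkF' (by omega) h2) hp.1)
  · intro p hp
    exact D.Qfun_eq (k := D.m) hm2 le_rfl (by rw [D.pkF_m']; exact hp.1.le) hp.2 hp.1
  · -- continuity at π
    have hb : D.pi < D.pkF (D.m - 1) := D.pi_lt_pkF' (by omega) (by omega)
    have hev : D.Qfun =ᶠ[nhdsWithin D.pi (Set.Ico D.pi (D.s 0))]
        (fun _ => D.s (D.m - 1)) := by
      filter_upwards [self_mem_nhdsWithin,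
        ((isOpen_Iio.eventually_mem hb).filter_mono nhdsWithin_le_nhds :
          ∀ᶠ x in nhdsWithin D.pi (Set.Ico D.pi (D.s 0)), x ∈ Set.Iio (D.pkF (D.m - 1)))]
        with x hx1 hx2
      exact D.Qfun_const hx1.1 hx2
    exact (continuousWithinAt_const).congr_of_eventuallyEq hev (D.Qfun_pi)
  · -- monotonicity
    rw [← hpk1]
    rcases eq_or_lt_of_le (show 2 ≤ D.m from hm2) with hm | hm3
    · -- m = 2
      have h1 : D.m - 1 = 1 := by omega
      intro x hx y hy _
      rw [D.Qfun_const hx.1 (by rw [h1]; exact hx.2),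
        D.Qfun_const hy.1 (by rw [h1]; exact hy.2)]
    · -- m ≥ 3
      have key : ∀ j, 1 ≤ j → (j ≤ D.m - 2 →
          MonotoneOn D.Qfun (Set.Icc D.pi (D.pkF (D.m - j)))) := by
        intro j hj1
        induction j, hj1 using Nat.le_induction with
        | base =>
          intro _
          have hQ : ∀ p ∈ Set.Icc D.pi (D.pkF (D.m - 1)), D.Qfun p = D.s (D.m - 1) := by
            intro p hp
            rcases lt_or_eq_of_le hp.2 with h | h
            · exact D.Qfun_const hp.1 h
            · rw [h]
              have e1 : D.Qfun (D.pkF (D.m - 1)) = D.qF (D.m - 1) (D.pkF (D.m - 1)) :=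
                D.Qfun_eq (by omega) (by omega) le_rfl
                  (D.pkF_lt' (by omega) (by omega) (by omega))
                  (D.pi_lt_pkF' (by omega) (by omega))
              have e2 := D.qF_match' (k := D.m - 1) (by omega) (by omega)
              have hm1 : D.m - 1 + 1 = D.m := by omega
              rw [hm1] at e2
              rw [e1, e2]
              exact D.qF_m_const' (ne_of_gt (D.pi_lt_pkF' (by omega) (by omega)))
          intro x hx y hy _
          rw [hQ x hx, hQ y hy]
        | succ j hj1 ih =>
          intro hj2
          have ihm := ih (by omega)
          set k := D.m - (j + 1) with hk
          have hk1 : k + 1 = D.m - j := by omega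
          have h2k : 2 ≤ k := by omega
          have hkm : k + 1 < D.m := by omega
          have hsplit : Set.Icc D.pi (D.pkF k)
              = Set.Icc D.pi (D.pkF (k + 1)) ∪ Set.Icc (D.pkF (k + 1)) (D.pkF k) :=
            (Set.Icc_union_Icc_eq_Icc (D.pi_lt_pkF' (by omega) (by omega)).le
              (D.pkF_succ_lt' (by omega) (by omega)).le).symm
          rw [hsplit]
          refine CalibScore.mono_glue (D.pi_lt_pkF' (by omega) (by omega)).le
            (fun p hp => hp.1)
            ⟨le_rfl, (D.pkF_succ_lt' (by omega) (by omega)).le⟩ ?_ ?_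
          · rw [hk1]; exact ihm
          · have hEq : Set.EqOn D.Qfun (D.qF (k + 1))
                (Set.Icc (D.pkF (k + 1)) (D.pkF k)) := by
              intro p hp
              rcases lt_or_eq_of_le hp.2 with h | h
              · exact D.Qfun_eq (by omega) (by omega) hp.1 (by simpa using h)
                  (lt_of_lt_of_le (D.pi_lt_pkF' (by omega) hkm) hp.1)
              · rw [h]
                have e1 : D.Qfun (D.pkF k) = D.qF k (D.pkF k) :=
                  D.Qfun_eq h2k (by omega) le_rfl
                    (D.pkF_lt' (by omega) (by omega) (by omega))
                    (D.pi_lt_pkF' (by omega) (by omega))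
                rw [e1, D.qF_match' h2k (by omega)]
            intro x hx y hy hxy
            rw [hEq hx, hEq hy]
            have hsm := (D.qF_smOn' (k := k + 1) (by omega) hkm).monotoneOn
            simp only [Nat.add_sub_cancel] at hsm
            exact hsm hx hy hxy
      have h2 : MonotoneOn D.Qfun (Set.Icc D.pi (D.pkF 2)) := by
        have hkey := key (D.m - 2) (by omega) le_rfl
        have he : D.m - (D.m - 2) = 2 := by omega
        rwa [he] at hkey
      have hsplit : Set.Ico D.pi (D.pkF 1)
          = Set.Icc D.pi (D.pkF 2) ∪ Set.Ico (D.pkF 2) (D.pkF 1) :=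
        (Set.Icc_union_Ico_eq_Ico (D.pi_lt_pkF' (by omega) (by omega)).le
          (D.pkF_succ_lt' (by omega) (by omega))).symm
      rw [hsplit]
      refine CalibScore.mono_glue (D.pi_lt_pkF' (by omega) (by omega)).le
        (fun p hp => hp.1)
        ⟨le_rfl, D.pkF_succ_lt' (by omega) (by omega)⟩ ?_ ?_
      · exact h2
      · have hEq : Set.EqOn D.Qfun (D.qF 2) (Set.Ico (D.pkF 2) (D.pkF 1)) := by
          intro p hp
          exact D.Qfun_eq (by omega) (by omega) hp.1 hp.2
            (lt_of_lt_of_le (D.pi_lt_pkF' (by omega) (by omega)) hp.1)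
        intro x hx y hy hxy
        rw [hEq hx, hEq hy]
        exact ((D.qF_smOn' (k := 2) le_rfl hm3).monotoneOn).mono
          Set.Ico_subset_Icc_self hx hy hxy
end
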